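/- Let X be a compact metric space, f : X → X continuous, C a chain component of f, and D(C) the partition of C into equivalence classes of the chain proximal relation ∼_C. For D ∈ D(C) define V^s(D) = ∩_{δ>0} { x ∈ W^s(C) : lim_{i→∞} d(f^i(x), f^i(D_δ)) = 0 }, where D_δ is the unique class of ∼_{C,δ} containing D. Then W^s(C) is the disjoint union of V^s(D) over D ∈ D(C), and each V^s(D) is a G_δ subset of W^s(C). -/

import Mathlib

open Filter Topology Metric Set

variable {X : Type*} [MetricSpace X]

/-- There is a `δ`-chain of `f` from `x` to `y`. -/
def ChainReach (f : X → X) (δ : ℝ) (x y : X) : Prop :=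
  ∃ k : ℕ, 0 < k ∧ ∃ c : ℕ → X, c 0 = x ∧ c k = y ∧
    ∀ i < k, dist (f (c i)) (c (i + 1)) ≤ δ

/-- `x → y` : for every `δ > 0` there is a `δ`-chain from `x` to `y`. -/
def ChainTo (f : X → X) (x y : X) : Prop := ∀ δ > 0, ChainReach f δ x y

/-- The chain recurrent set. -/
def CR (f : X → X) : Set X := {x | ChainTo f x x}

/-- The relation `x ↔ y`. -/
def ChainRel (f : X → X) (x y : X) : Prop := ChainTo f x y ∧ ChainTo f y x

/-- A chain component: an equivalence class of `↔` on `CR f`. -/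
def IsChainComponent (f : X → X) (C : Set X) : Prop :=
  ∃ x ∈ CR f, C = {y | y ∈ CR f ∧ ChainRel f x y}

/-- A `δ`-chain of `f` from `x` to `y` of length `k`, all of whose points lie in `S`. -/
def ChainInLen (f : X → X) (S : Set X) (δ : ℝ) (x y : X) (k : ℕ) : Prop :=
  0 < k ∧ ∃ c : ℕ → X, (∀ i ≤ k, c i ∈ S) ∧ c 0 = x ∧ c k = y ∧
    ∀ i < k, dist (f (c i)) (c (i + 1)) ≤ δ

/-- There is a `δ`-chain from `x` to `y` inside `S`. -/
def ChainInReach (f : X → X) (S : Set X) (δ : ℝ) (x y : X) : Prop :=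
  ∃ k, ChainInLen f S δ x y k

/-- `f` restricted to `S` is chain transitive. -/
def ChainTransitiveOn (f : X → X) (S : Set X) : Prop :=
  ∀ x ∈ S, ∀ y ∈ S, ∀ δ > 0, ChainInReach f S δ x y

/-- The set of lengths of `δ`-cycles of `f` restricted to `C`. -/
def cycLengths (f : X → X) (C : Set X) (δ : ℝ) : Set ℕ :=
  {k | ∃ x ∈ C, ChainInLen f C δ x x k}

/-- The relation `∼_{C,δ}` : there is a `δ`-chain in `C` from `x` to `y` whose
length is divisible by the gcd `m(C,δ)` of all `δ`-cycle lengths (divisibility by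
the gcd is expressed via common divisors). -/
def relCdelta (f : X → X) (C : Set X) (δ : ℝ) (x y : X) : Prop :=
  ∃ k : ℕ, (∀ d : ℕ, (∀ l ∈ cycLengths f C δ, d ∣ l) → d ∣ k) ∧
    ChainInLen f C δ x y k

/-- The chain proximal relation `∼_C`. -/
def relC (f : X → X) (C : Set X) (x y : X) : Prop := ∀ δ > 0, relCdelta f C δ x y

/-- The class of `∼_{C,δ}` containing `x`. -/
def classCdelta (f : X → X) (C : Set X) (δ : ℝ) (x : X) : Set X :=
  {y | y ∈ C ∧ relCdelta f C δ x y}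

/-- The class of `∼_C` containing `x`. -/
def classC (f : X → X) (C : Set X) (x : X) : Set X :=
  {y | y ∈ C ∧ relC f C x y}

/-- The basin of attraction of a set. -/
def basin (f : X → X) (C : Set X) : Set X :=
  {x | Tendsto (fun i => infDist (f^[i] x) C) atTop (𝓝 0)}

/-- `V^s(D)` for the class `D` of `∼_C` containing the point `x ∈ C`. -/
def Vs (f : X → X) (C : Set X) (x : X) : Set X :=
  {z | z ∈ basin f C ∧ ∀ δ > 0,
    Tendsto (fun i => infDist (f^[i] z) (f^[i] '' classCdelta f C δ x)) atTop (𝓝 0)}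

section chains

variable {f : X → X} {S : Set X} {δ δ' : ℝ} {x y z : X} {k l : ℕ}

lemma ChainInLen.concat (h1 : ChainInLen f S δ x y k) (h2 : ChainInLen f S δ y z l) :
    ChainInLen f S δ x z (k + l) := by
  obtain ⟨hk, c, hcS, hc0, hck, hcstep⟩ := h1
  obtain ⟨hl, d, hdS, hd0, hdl, hdstep⟩ := h2
  refine ⟨by omega, fun i => if i < k then c i else d (i - k), ?_, ?_, ?_, ?_⟩
  · intro i hi
    by_cases h : i < k
    · simpa [h] using hcS i (le_of_lt h)
    · simp only [if_neg h]
      exact hdS _ (by omega)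
  · simp only [if_pos hk]
    exact hc0
  · have h : ¬ (k + l < k) := by omega
    simp only [if_neg h]
    have h2 : k + l - k = l := by omega
    rw [h2, hdl]
  · intro i hi
    show dist (f (if i < k then c i else d (i - k))) (if i + 1 < k then c (i+1) else d (i + 1 - k)) ≤ δ
    by_cases h : i + 1 ≤ k
    · have hik : i < k := by omega
      have he1 : (if i + 1 < k then c (i+1) else d (i + 1 - k)) = c (i+1) := by
        by_cases h' : i + 1 < k
        · simp [h']
        · have hik1 : i + 1 = k := by omega
          have h3 : i + 1 - k = 0 := by omega
          simp only [if_neg h', h3, hik1]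
          rw [if_neg (lt_irrefl k), show k - k = 0 from by omega, hd0, ← hck]
      rw [he1, if_pos hik]
      exact hcstep i hik
    · have hik : ¬ (i < k) := by omega
      have h1 : ¬ (i + 1 < k) := by omega
      rw [if_neg hik, if_neg h1]
      have h4 : i + 1 - k = (i - k) + 1 := by omega
      rw [h4]
      exact hdstep (i - k) (by omega)

lemma ChainInReach.trans (h1 : ChainInReach f S δ x y) (h2 : ChainInReach f S δ y z) :
    ChainInReach f S δ x z := by
  obtain ⟨k, hk⟩ := h1; obtain ⟨l, hl⟩ := h2; exact ⟨k + l, hk.concat hl⟩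

lemma ChainInLen.mono (hδ : δ ≤ δ') (h : ChainInLen f S δ x y k) : ChainInLen f S δ' x y k := by
  obtain ⟨hk, c, hS, h0, hke, hstep⟩ := h
  exact ⟨hk, c, hS, h0, hke, fun i hi => (hstep i hi).trans hδ⟩

lemma ChainInLen.chainReach (h : ChainInLen f S δ x y k) : ChainReach f δ x y := by
  obtain ⟨hk, c, _, h0, hke, hstep⟩ := h
  exact ⟨k, hk, c, h0, hke, hstep⟩

lemma ChainReach.trans (h1 : ChainReach f δ x y) (h2 : ChainReach f δ y z) :
    ChainReach f δ x z := by
  obtain ⟨k, hk, c, hc0, hck, hcstep⟩ := h1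
  obtain ⟨l, hl, d, hd0, hdl, hdstep⟩ := h2
  have : ChainInLen f univ δ x z (k + l) :=
    ChainInLen.concat ⟨hk, c, fun _ _ => mem_univ _, hc0, hck, hcstep⟩
      ⟨hl, d, fun _ _ => mem_univ _, hd0, hdl, hdstep⟩
  exact this.chainReach

lemma ChainTo.trans (h1 : ChainTo f x y) (h2 : ChainTo f y z) : ChainTo f x z :=
  fun δ hδ => (h1 δ hδ).trans (h2 δ hδ)

/-- one-step chain -/
lemma chainReach_apply (hδ : 0 < δ) : ChainReach f δ x (f x) :=
  ⟨1, one_pos, fun i => if i = 0 then x else f x, by simp, by simp, by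
    intro i hi
    have : i = 0 := by omega
    simp [this, hδ.le]⟩

lemma chainTo_apply : ChainTo f x (f x) := fun _ hδ => chainReach_apply hδ

/-- the orbit is a chain in an invariant set -/
lemma chainInLen_orbit (hS : MapsTo f S S) (hx : x ∈ S) (hδ : 0 ≤ δ) (hl : 0 < l) :
    ChainInLen f S δ x (f^[l] x) l := by
  refine ⟨hl, fun i => f^[i] x, ?_, by simp, rfl, ?_⟩
  · intro i _
    induction i with
    | zero => simpa using hx
    | succ n ih =>
        show f^[n+1] x ∈ S
        rw [Function.iterate_succ_apply']
        exact hS (ih (by omega))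
  · intro i _
    show dist (f (f^[i] x)) (f^[i+1] x) ≤ δ
    rw [show f^[i+1] x = f (f^[i] x) from Function.iterate_succ_apply' f i x]
    simp [hδ]

end chains
section basics

variable {f : X → X} {C : Set X} {δ δ' : ℝ} {x y z : X} {k l : ℕ}

lemma ChainReach.mono (hδ : δ ≤ δ') (h : ChainReach f δ x y) : ChainReach f δ' x y := by
  obtain ⟨k, hk, c, h0, hk', hs⟩ := h
  exact ⟨k, hk, c, h0, hk', fun i hi => (hs i hi).trans hδ⟩

/-- modify the endpoint of a chain -/
lemma ChainReach.endpoint (h : ChainReach f δ x y) (hd : dist y z ≤ δ') :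
    ChainReach f (δ + δ') x z := by
  obtain ⟨k, hk, c, h0, hk', hs⟩ := h
  have hδ' : 0 ≤ δ' := le_trans dist_nonneg hd
  refine ⟨k, hk, fun i => if i = k then z else c i, ?_, by simp, ?_⟩
  · simp only [if_neg (by omega : ¬ (0 = k))]; exact h0
  · intro i hi
    show dist (f (if i = k then z else c i)) (if i + 1 = k then z else c (i+1)) ≤ δ + δ'
    rw [if_neg (by omega : ¬ (i = k))]
    by_cases h1 : i + 1 = k
    · rw [if_pos h1]
      calc dist (f (c i)) z ≤ dist (f (c i)) (c (i+1)) + dist (c (i+1)) z := dist_triangle _ _ _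
        _ ≤ δ + δ' := by
            have h3 := hs i hi
            have h4 : c (i+1) = y := by rw [h1, hk']
            rw [h4]
            exact add_le_add (h4 ▸ h3) hd
    · rw [if_neg h1]
      exact le_trans (hs i hi) (by linarith)

/-- modify the start point of a chain using continuity -/
lemma ChainTo.of_close_start (hf : Continuous f)
    (h : ∀ ε > (0:ℝ), ∃ w, dist w x ≤ ε ∧ ChainReach f ε w y) :
    ChainTo f x y := by
  intro δ hδ
  obtain ⟨r, hr, hcont⟩ := Metric.continuous_iff.1 hf x (δ/2) (by linarith)
  obtain ⟨w, hwx, k, hk, c, h0, hk', hs⟩ := h (min (δ/2) (r/2)) (by positivity)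
  refine ⟨k, hk, fun i => if i = 0 then x else c i, by simp, ?_, ?_⟩
  · show (if k = 0 then x else c k) = y
    rw [if_neg (by omega : ¬ (k = 0))]; exact hk'
  · intro i hi
    show dist (f (if i = 0 then x else c i)) (if i + 1 = 0 then x else c (i+1)) ≤ δ
    rw [if_neg (by omega : ¬ (i + 1 = 0))]
    by_cases h1 : i = 0
    · rw [if_pos h1, h1]
      have h2 : dist (c 0) x < r := by
        rw [h0]
        calc dist w x ≤ min (δ/2) (r/2) := hwx
          _ ≤ r/2 := min_le_right _ _
          _ < r := by linarith
      calc dist (f x) (c 1) ≤ dist (f x) (f (c 0)) + dist (f (c 0)) (c 1) := dist_triangle _ _ _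
        _ ≤ δ/2 + min (δ/2) (r/2) := by
            refine add_le_add ?_ (hs 0 (h1 ▸ hi))
            rw [dist_comm]
            exact le_of_lt (hcont _ h2)
        _ ≤ δ := by
            have := min_le_left (δ/2) (r/2)
            linarith
    · rw [if_neg h1]
      exact le_trans (hs i hi) (le_trans (min_le_left _ _) (by linarith))

lemma ChainTo.of_seq_right {u : ℕ → X} (hu : ∀ n, ChainTo f x (u n))
    (hlim : Tendsto u atTop (𝓝 y)) : ChainTo f x y := by
  intro δ hδ
  obtain ⟨n, hn⟩ := (Metric.tendsto_atTop.1 hlim (δ/2) (by linarith))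
  have h1 : ChainReach f (δ/2) x (u n) := hu n (δ/2) (by linarith)
  have h2 := h1.endpoint (z := y) (le_of_lt (hn n le_rfl))
  have h3 : δ/2 + δ/2 = δ := by ring
  rwa [h3] at h2

lemma ChainTo.of_seq_left (hf : Continuous f) {u : ℕ → X} (hu : ∀ n, ChainTo f (u n) y)
    (hlim : Tendsto u atTop (𝓝 x)) : ChainTo f x y := by
  refine ChainTo.of_close_start hf (fun ε hε => ?_)
  obtain ⟨n, hn⟩ := (Metric.tendsto_atTop.1 hlim ε hε)
  exact ⟨u n, le_of_lt (hn n le_rfl), hu n ε hε⟩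

/-- shifting a chain from `x ∈ CR` -/
lemma ChainTo.shift (hf : Continuous f) (hx : x ∈ CR f) (h : ChainTo f x y) :
    ChainTo f (f x) y := by
  intro δ hδ
  obtain ⟨r, hr, hcont⟩ := Metric.continuous_iff.1 hf (f x) (δ/2) (by linarith)
  set ε := min (δ/2) (r/2) with hε
  have hε0 : 0 < ε := by positivity
  have hεr : ε < r := lt_of_le_of_lt (min_le_right _ _) (by linarith)
  have hεδ : ε ≤ δ/2 := min_le_left _ _
  obtain ⟨k₁, hk₁, c₁, h10, h1k, h1s⟩ := hx ε hε0
  obtain ⟨k₂, hk₂, c₂, h20, h2k, h2s⟩ := h ε hε0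
  have H1 : ChainInLen f univ ε x x k₁ := ⟨hk₁, c₁, fun _ _ => mem_univ _, h10, h1k, h1s⟩
  have H2 : ChainInLen f univ ε x y k₂ := ⟨hk₂, c₂, fun _ _ => mem_univ _, h20, h2k, h2s⟩
  obtain ⟨-, c, -, h0, hk', hs⟩ := H1.concat H2
  have hk2 : 2 ≤ k₁ + k₂ := by omega
  set k := k₁ + k₂ with hkdef
  refine ⟨k - 1, by omega, fun i => if i = 0 then f x else c (i+1), by simp, ?_, ?_⟩
  · show (if k - 1 = 0 then f x else c (k - 1 + 1)) = y
    rw [if_neg (by omega : ¬ (k - 1 = 0))]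
    have h5 : k - 1 + 1 = k := by omega
    rw [h5, hk']
  · intro i hi
    show dist (f (if i = 0 then f x else c (i+1))) (if i + 1 = 0 then f x else c (i+2)) ≤ δ
    rw [if_neg (by omega : ¬ (i + 1 = 0))]
    by_cases h1 : i = 0
    · rw [if_pos h1, h1]
      have hc1 : dist (c 1) (f x) < r := by
        rw [dist_comm]
        calc dist (f x) (c 1) = dist (f (c 0)) (c 1) := by rw [h0]
          _ ≤ ε := hs 0 (by omega)
          _ < r := hεr
      calc dist (f (f x)) (c 2)
          ≤ dist (f (f x)) (f (c 1)) + dist (f (c 1)) (c 2) := dist_triangle _ _ _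
        _ ≤ δ/2 + ε := by
            refine add_le_add ?_ (hs 1 (by omega))
            rw [dist_comm]
            exact le_of_lt (hcont _ hc1)
        _ ≤ δ := by linarith
    · rw [if_neg h1]
      calc dist (f (c (i+1))) (c (i+2)) ≤ ε := hs (i+1) (by omega)
        _ ≤ δ := by linarith

lemma CR.apply (hf : Continuous f) (hx : x ∈ CR f) : f x ∈ CR f :=
  (ChainTo.shift hf hx hx).trans chainTo_apply

end basics
section component

variable {f : X → X} {C : Set X} {δ δ' : ℝ} {x y z : X} {k l : ℕ}

lemma IsChainComponent.mem_CR (hC : IsChainComponent f C) (hy : y ∈ C) : y ∈ CR f := by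
  obtain ⟨x₀, hx₀, rfl⟩ := hC; exact hy.1

lemma IsChainComponent.base_mem (hC : IsChainComponent f C) :
    ∃ x₀, x₀ ∈ C ∧ C = {y | y ∈ CR f ∧ ChainRel f x₀ y} := by
  obtain ⟨x₀, hx₀, rfl⟩ := hC
  exact ⟨x₀, ⟨hx₀, hx₀, hx₀⟩, rfl⟩

lemma IsChainComponent.nonempty (hC : IsChainComponent f C) : C.Nonempty := by
  obtain ⟨x₀, hx₀, -⟩ := hC.base_mem; exact ⟨x₀, hx₀⟩

lemma IsChainComponent.chainTo (hC : IsChainComponent f C) (hx : x ∈ C) (hy : y ∈ C) :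
    ChainTo f x y := by
  obtain ⟨x₀, -, rfl⟩ := hC
  exact hx.2.2.trans hy.2.1

lemma IsChainComponent.mem_of_chainTo (hC : IsChainComponent f C) (hx : x ∈ C)
    (h1 : ChainTo f x z) (h2 : ChainTo f z x) : z ∈ C := by
  obtain ⟨x₀, hx₀, rfl⟩ := hC
  exact ⟨h2.trans h1, hx.2.1.trans h1, h2.trans hx.2.2⟩

lemma IsChainComponent.mapsTo (hf : Continuous f) (hC : IsChainComponent f C) :
    MapsTo f C C := by
  intro x hx
  have hxCR : x ∈ CR f := hC.mem_CR hx
  exact hC.mem_of_chainTo hx chainTo_apply (ChainTo.shift hf hxCR hxCR)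

lemma IsChainComponent.isClosed (hf : Continuous f) (hC : IsChainComponent f C) :
    IsClosed C := by
  obtain ⟨x₀, hx₀C, hCeq⟩ := hC.base_mem
  refine IsSeqClosed.isClosed (fun u p hu hup => ?_)
  have h1 : ChainTo f x₀ p := ChainTo.of_seq_right (fun n => hC.chainTo hx₀C (hu n)) hup
  have h2 : ChainTo f p x₀ := ChainTo.of_seq_left hf (fun n => hC.chainTo (hu n) hx₀C) hup
  exact hC.mem_of_chainTo hx₀C h1 h2

theorem IsChainComponent.chainTransitiveOn [CompactSpace X] (hf : Continuous f)
    (hC : IsChainComponent f C) : ChainTransitiveOn f C := by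
  intro x hx y hy δ hδ
  have hxCR : x ∈ CR f := hC.mem_CR hx
  set A : ℝ → Set X := fun ε => {z | ChainReach f ε x z ∧ ChainReach f ε z x} with hA
  set K : ℕ → Set X := fun n => closure (A (1/(n+1))) with hK
  have hAmono : ∀ ε ε' : ℝ, ε ≤ ε' → A ε ⊆ A ε' :=
    fun ε ε' h z hz => ⟨hz.1.mono h, hz.2.mono h⟩
  have hKnested : ∀ n, K (n+1) ⊆ K n := by
    intro n
    apply closure_mono
    apply hAmono
    have h1 : (0:ℝ) < (n:ℝ) + 1 := by positivity
    rw [div_le_div_iff₀ (by positivity) h1]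
    push_cast; nlinarith
  have hKne : ∀ n, (K n).Nonempty := by
    intro n
    have hpos : (0:ℝ) < 1/(n+1) := by positivity
    exact ⟨x, subset_closure ⟨hxCR _ hpos, hxCR _ hpos⟩⟩
  have hInter : (⋂ n, K n) ⊆ C := by
    intro z hz
    have hz' : ∀ ε > (0:ℝ), ∃ w, dist w z ≤ ε ∧ w ∈ A ε := by
      intro ε hε
      obtain ⟨n, hn⟩ := exists_nat_one_div_lt hε
      have hzn : z ∈ K n := mem_iInter.1 hz n
      obtain ⟨w, hwA, hwz⟩ := Metric.mem_closure_iff.1 hzn ε hε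
      exact ⟨w, by rw [dist_comm]; exact le_of_lt hwz, hAmono _ _ (le_of_lt hn) hwA⟩
    have h1 : ChainTo f x z := by
      intro δ' hδ'
      obtain ⟨w, hwz, hw1, -⟩ := hz' (δ'/2) (by linarith)
      have h2 := hw1.endpoint (z := z) hwz
      have h3 : δ'/2 + δ'/2 = δ' := by ring
      rwa [h3] at h2
    have h2 : ChainTo f z x := by
      refine ChainTo.of_close_start hf (fun ε hε => ?_)
      obtain ⟨w, hwz, -, hw2⟩ := hz' ε hε
      exact ⟨w, hwz, hw2⟩
    exact hC.mem_of_chainTo hx h1 h2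
  obtain ⟨r, hr, hunif⟩ := Metric.uniformContinuous_iff.1
    (CompactSpace.uniformContinuous_of_continuous hf) (δ/4) (by linarith)
  set ρ := min r (δ/4) with hρ
  have hρ0 : 0 < ρ := by positivity
  set U := {w : X | infDist w C < ρ/2} with hU
  have hUopen : IsOpen U := isOpen_lt (continuous_infDist_pt C) continuous_const
  have hCU : C ⊆ U := by
    intro w hw
    show infDist w C < ρ/2
    rw [infDist_zero_of_mem hw]
    positivity
  obtain ⟨n, hKU⟩ : ∃ n, K n ⊆ U := by
    by_contra hcon
    push_neg at hcon
    have hne : ∀ m, (K m ∩ Uᶜ).Nonempty := by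
      intro m
      obtain ⟨w, hw1, hw2⟩ := not_subset.1 (hcon m)
      exact ⟨w, hw1, hw2⟩
    have hnon := IsCompact.nonempty_iInter_of_sequence_nonempty_isCompact_isClosed
      (fun m => K m ∩ Uᶜ)
      (fun m => inter_subset_inter (hKnested m) Subset.rfl) hne
      ((isClosed_closure.inter hUopen.isClosed_compl).isCompact)
      (fun m => isClosed_closure.inter hUopen.isClosed_compl)
    obtain ⟨z, hz⟩ := hnon
    have hz1 : z ∈ ⋂ m, K m := mem_iInter.2 (fun m => (mem_iInter.1 hz m).1)
    exact (mem_iInter.1 hz 0).2 (hCU (hInter hz1))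
  set ε := min ((1:ℝ)/(n+1)) (δ/8) with hεdef
  have hε0 : 0 < ε := by positivity
  have hεn : ε ≤ 1/(n+1) := min_le_left _ _
  have hεδ : ε ≤ δ/8 := min_le_right _ _
  obtain ⟨k₁, hk₁, c₁, h10, h1k, h1s⟩ := hC.chainTo hx hy ε hε0
  obtain ⟨k₂, hk₂, c₂, h20, h2k, h2s⟩ := hC.chainTo hy hx ε hε0
  set e : ℕ → X := fun i => if i < k₁ then c₁ i else c₂ (i - k₁) with he
  have he0 : e 0 = x := by simp only [he, if_pos hk₁]; exact h10
  have hek1 : e k₁ = y := by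
    simp only [he, if_neg (lt_irrefl k₁), Nat.sub_self]; exact h20
  have hekk : e (k₁ + k₂) = x := by
    simp only [he, if_neg (by omega : ¬ (k₁ + k₂ < k₁))]
    rw [show k₁ + k₂ - k₁ = k₂ from by omega]; exact h2k
  have hes : ∀ i < k₁ + k₂, dist (f (e i)) (e (i+1)) ≤ ε := by
    intro i hi
    simp only [he]
    by_cases h : i + 1 ≤ k₁
    · have hik : i < k₁ := by omega
      have he1 : (if i + 1 < k₁ then c₁ (i+1) else c₂ (i + 1 - k₁)) = c₁ (i+1) := by
        by_cases h' : i + 1 < k₁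
        · simp [h']
        · have hik1 : i + 1 = k₁ := by omega
          have h3 : i + 1 - k₁ = 0 := by omega
          rw [if_neg h', h3, h20, ← h1k, hik1]
      rw [he1, if_pos hik]
      exact h1s i hik
    · have hik : ¬ (i < k₁) := by omega
      have h1 : ¬ (i + 1 < k₁) := by omega
      rw [if_neg hik, if_neg h1]
      rw [show i + 1 - k₁ = (i - k₁) + 1 from by omega]
      exact h2s (i - k₁) (by omega)
  have heA : ∀ j ≤ k₁ + k₂, e j ∈ A ε := by
    intro j hj
    constructor
    · rcases Nat.eq_zero_or_pos j with h|h
      · rw [h, he0]; exact hxCR ε hε0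
      · exact ⟨j, h, e, he0, rfl, fun i hi => hes i (by omega)⟩
    · rcases eq_or_lt_of_le hj with h|h
      · rw [h, hekk]; exact hxCR ε hε0
      · refine ⟨k₁ + k₂ - j, by omega, fun i => e (j + i), by simp, ?_, ?_⟩
        · show e (j + (k₁ + k₂ - j)) = x
          rw [show j + (k₁ + k₂ - j) = k₁ + k₂ from by omega, hekk]
        · intro i hi
          show dist (f (e (j + i))) (e (j + (i+1))) ≤ ε
          rw [show j + (i+1) = (j + i) + 1 from by omega]
          exact hes (j + i) (by omega)
  have hrepl : ∀ j, ∃ p, p ∈ C ∧ (j ≤ k₁ → dist (e j) p ≤ ρ/2) ∧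
      (j = 0 → p = x) ∧ (j = k₁ → p = y) := by
    intro j
    rcases eq_or_ne j 0 with h|h
    · refine ⟨x, hx, ?_, fun _ => rfl, fun hjk => by omega⟩
      intro _
      rw [h, he0, dist_self]
      positivity
    · rcases eq_or_ne j k₁ with h'|h'
      · refine ⟨y, hy, ?_, fun h0 => absurd h0 h, fun _ => rfl⟩
        intro _
        rw [h', hek1, dist_self]
        positivity
      · by_cases hjk : j ≤ k₁
        · have hjU : e j ∈ U := hKU (subset_closure (hAmono ε _ hεn (heA j (by omega))))
          obtain ⟨p, hpC, hpd⟩ := (infDist_lt_iff hC.nonempty).1 hjU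
          exact ⟨p, hpC, fun _ => le_of_lt hpd, fun h0 => absurd h0 h, fun hk => absurd hk h'⟩
        · exact ⟨x, hx, fun hle => absurd hle hjk, fun h0 => absurd h0 h, fun hk => absurd hk h'⟩
  choose g hgC hgd hg0 hgk using hrepl
  refine ⟨k₁, hk₁, g, fun i _ => hgC i, hg0 0 rfl, hgk k₁ rfl, ?_⟩
  intro j hj
  have hd1 : dist (g j) (e j) < r := by
    rw [dist_comm]
    calc dist (e j) (g j) ≤ ρ/2 := hgd j (by omega)
      _ ≤ r/2 := by
          have := min_le_left r (δ/4)
          linarith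
      _ < r := by linarith
  calc dist (f (g j)) (g (j+1))
      ≤ dist (f (g j)) (f (e j)) + dist (f (e j)) (e (j+1)) + dist (e (j+1)) (g (j+1)) :=
        dist_triangle4 _ _ _ _
    _ ≤ δ/4 + ε + ρ/2 := by
        exact add_le_add (add_le_add (le_of_lt (hunif hd1)) (hes j (by omega)))
          (hgd (j+1) (by omega))
    _ ≤ δ := by
        have h1 := min_le_right r (δ/4)
        have h2 : ρ/2 ≤ δ/8 := by
          rw [hρ]
          have := min_le_right r (δ/4)
          linarith
        linarith

end component
section relmachine

variable [CompactSpace X] {f : X → X} {C : Set X} {δ δ' : ℝ} {x y z u v : X} {k l : ℕ}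

lemma good_add (h1 : ∀ d : ℕ, (∀ l ∈ cycLengths f C δ, d ∣ l) → d ∣ k)
    (h2 : ∀ d : ℕ, (∀ l ∈ cycLengths f C δ, d ∣ l) → d ∣ l) :
    ∀ d : ℕ, (∀ l ∈ cycLengths f C δ, d ∣ l) → d ∣ (k + l) :=
  fun d hd => Nat.dvd_add (h1 d hd) (h2 d hd)

lemma good_cancel (h1 : ∀ d : ℕ, (∀ l' ∈ cycLengths f C δ, d ∣ l') → d ∣ k)
    (h2 : ∀ d : ℕ, (∀ l' ∈ cycLengths f C δ, d ∣ l') → d ∣ (k + l)) :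
    ∀ d : ℕ, (∀ l' ∈ cycLengths f C δ, d ∣ l') → d ∣ l := by
  intro d hd
  have h3 := Nat.dvd_sub (h2 d hd) (h1 d hd)
  simpa using h3

lemma good_of_cyc (h : k ∈ cycLengths f C δ) :
    ∀ d : ℕ, (∀ l ∈ cycLengths f C δ, d ∣ l) → d ∣ k :=
  fun _ hd => hd k h

lemma cycLengths_mono (hδ : δ ≤ δ') : cycLengths f C δ ⊆ cycLengths f C δ' := by
  rintro k ⟨x, hx, h⟩
  exact ⟨x, hx, h.mono hδ⟩

lemma relCdelta.mem_left (h : relCdelta f C δ x y) : x ∈ C := by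
  obtain ⟨k, -, -, c, hS, h0, -, -⟩ := h
  exact h0 ▸ hS 0 (Nat.zero_le _)

lemma relCdelta.mem_right (h : relCdelta f C δ x y) : y ∈ C := by
  obtain ⟨k, -, -, c, hS, -, hk, -⟩ := h
  exact hk ▸ hS k le_rfl

lemma relCdelta.refl (hf : Continuous f) (hC : IsChainComponent f C) (hδ : 0 < δ)
    (hx : x ∈ C) : relCdelta f C δ x x := by
  obtain ⟨k, hk⟩ := hC.chainTransitiveOn hf x hx x hx δ hδ
  exact ⟨k, good_of_cyc ⟨x, hx, hk⟩, hk⟩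

lemma relCdelta.trans (h1 : relCdelta f C δ x y) (h2 : relCdelta f C δ y z) :
    relCdelta f C δ x z := by
  obtain ⟨k, hk, hc⟩ := h1
  obtain ⟨l, hl, hd⟩ := h2
  exact ⟨k + l, good_add hk hl, hc.concat hd⟩

lemma relCdelta.symm (hf : Continuous f) (hC : IsChainComponent f C) (hδ : 0 < δ)
    (h : relCdelta f C δ x y) : relCdelta f C δ y x := by
  have hxC := h.mem_left
  have hyC := h.mem_right
  obtain ⟨k, hk, hc⟩ := h
  obtain ⟨L, hL⟩ := hC.chainTransitiveOn hf y hyC x hxC δ hδ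
  have hcyc : (k + L) ∈ cycLengths f C δ := ⟨x, hxC, hc.concat hL⟩
  exact ⟨L, good_cancel hk (good_of_cyc hcyc), hL⟩

lemma relCdelta.mono (hδ : δ ≤ δ') (h : relCdelta f C δ x y) : relCdelta f C δ' x y := by
  obtain ⟨k, hk, hc⟩ := h
  exact ⟨k, fun d hd => hk d (fun l hl => hd l (cycLengths_mono hδ hl)), hc.mono hδ⟩

lemma chainInLen_one_apply (hf : Continuous f) (hC : IsChainComponent f C) (hδ : 0 < δ)
    (hx : x ∈ C) : ChainInLen f C δ x (f x) 1 := by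
  have h := chainInLen_orbit (f := f) (hC.mapsTo hf) hx hδ.le one_pos
  simpa using h

/-- push a relation forward by `f` -/
lemma relCdelta.push (hf : Continuous f) (hC : IsChainComponent f C) (hδ : 0 < δ)
    (h : relCdelta f C δ x y) : relCdelta f C δ (f x) (f y) := by
  obtain ⟨k, hk, hc⟩ := h
  have hx := hc.2.choose_spec.2.1 ▸ (relCdelta.mem_left ⟨k, hk, hc⟩)
  have hxC : x ∈ C := relCdelta.mem_left ⟨k, hk, hc⟩
  have hyC : y ∈ C := relCdelta.mem_right ⟨k, hk, hc⟩
  have hfx : f x ∈ C := hC.mapsTo hf hxC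
  obtain ⟨L, hL⟩ := hC.chainTransitiveOn hf (f x) hfx x hxC δ hδ
  have hone : ChainInLen f C δ x (f x) 1 := chainInLen_one_apply hf hC hδ hxC
  have hcyc : (1 + L) ∈ cycLengths f C δ := ⟨x, hxC, hone.concat hL⟩
  refine ⟨L + (k + 1), ?_, hL.concat (hc.concat (chainInLen_one_apply hf hC hδ hyC))⟩
  intro d hd
  have h1 : d ∣ (1 + L) := good_of_cyc hcyc d hd
  have h2 : d ∣ k := hk d hd
  have h3 : L + (k + 1) = (1 + L) + k := by ring
  rw [h3]
  exact Nat.dvd_add h1 h2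
/-- pull a relation back along `f` -/
lemma relCdelta.pull (hf : Continuous f) (hC : IsChainComponent f C) (hδ : 0 < δ)
    (hx : x ∈ C) (hy : y ∈ C) (h : relCdelta f C δ (f x) (f y)) : relCdelta f C δ x y := by
  obtain ⟨k, hk, hc⟩ := h
  have hfy : f y ∈ C := hC.mapsTo hf hy
  obtain ⟨L, hL⟩ := hC.chainTransitiveOn hf (f y) hfy y hy δ hδ
  have hone : ChainInLen f C δ y (f y) 1 := chainInLen_one_apply hf hC hδ hy
  have hcyc : (1 + L) ∈ cycLengths f C δ := ⟨y, hy, hone.concat hL⟩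
  refine ⟨1 + (k + L), ?_, (chainInLen_one_apply hf hC hδ hx).concat (hc.concat hL)⟩
  intro d hd
  have h1 : d ∣ (1 + L) := good_of_cyc hcyc d hd
  have h2 : d ∣ k := hk d hd
  have h3 : 1 + (k + L) = (1 + L) + k := by ring
  rw [h3]
  exact Nat.dvd_add h1 h2

lemma relCdelta.push_iterate (hf : Continuous f) (hC : IsChainComponent f C) (hδ : 0 < δ)
    (h : relCdelta f C δ x y) (i : ℕ) : relCdelta f C δ (f^[i] x) (f^[i] y) := by
  induction i with
  | zero => simpa using h
  | succ n ih =>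
      rw [Function.iterate_succ_apply', Function.iterate_succ_apply']
      exact ih.push hf hC hδ

lemma relCdelta.pull_iterate (hf : Continuous f) (hC : IsChainComponent f C) (hδ : 0 < δ)
    (hx : x ∈ C) (hy : y ∈ C) (i : ℕ) (h : relCdelta f C δ (f^[i] x) (f^[i] y)) :
    relCdelta f C δ x y := by
  induction i with
  | zero => simpa using h
  | succ n ih =>
      rw [Function.iterate_succ_apply', Function.iterate_succ_apply'] at h
      exact ih (h.pull hf hC hδ (hC.mapsTo hf |>.iterate n hx) (hC.mapsTo hf |>.iterate n hy))

lemma IsChainComponent.surjOn (hf : Continuous f) (hC : IsChainComponent f C) :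
    SurjOn f C C := by
  intro y hy
  have hq : ∀ n : ℕ, ∃ q ∈ C, dist (f q) y ≤ 1/(n+1) := by
    intro n
    have hpos : (0:ℝ) < 1/(n+1) := by positivity
    obtain ⟨k, hk, c, hS, h0, hkk, hs⟩ := hC.chainTransitiveOn hf y hy y hy _ hpos
    refine ⟨c (k-1), hS _ (by omega), ?_⟩
    have := hs (k-1) (by omega)
    rwa [show k - 1 + 1 = k from by omega, hkk] at this
  choose q hqC hqd using hq
  obtain ⟨p, hpC, φ, hφ, hconv⟩ :=
    (hC.isClosed hf).isCompact.tendsto_subseq hqC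
  refine ⟨p, hpC, ?_⟩
  have h1 : Tendsto (fun j => f (q (φ j))) atTop (𝓝 (f p)) :=
    (hf.tendsto p).comp hconv
  have h2 : Tendsto (fun j => f (q (φ j))) atTop (𝓝 y) := by
    rw [tendsto_iff_dist_tendsto_zero]
    refine squeeze_zero (fun j => dist_nonneg) (fun j => ?_) tendsto_one_div_add_atTop_nhds_zero_nat
    calc dist (f (q (φ j))) y ≤ 1/(φ j + 1) := hqd (φ j)
      _ ≤ 1/(j + 1) := by
          have hj : (j:ℝ) ≤ φ j := by exact_mod_cast hφ.le_apply
          rw [div_le_div_iff₀ (by positivity) (by positivity)]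
          linarith
  exact tendsto_nhds_unique h1 h2

lemma IsChainComponent.surjOn_iterate (hf : Continuous f) (hC : IsChainComponent f C) (i : ℕ) :
    SurjOn (f^[i]) C C := by
  induction i with
  | zero => simp [SurjOn]
  | succ n ih =>
      rw [Function.iterate_succ']
      exact (hC.surjOn hf).comp ih

lemma image_classCdelta (hf : Continuous f) (hC : IsChainComponent f C) (hδ : 0 < δ)
    (hx : x ∈ C) : f '' classCdelta f C δ x = classCdelta f C δ (f x) := by
  ext b
  constructor
  · rintro ⟨a, ⟨haC, hrel⟩, rfl⟩
    exact ⟨hC.mapsTo hf haC, hrel.push hf hC hδ⟩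
  · rintro ⟨hbC, hrel⟩
    obtain ⟨a, haC, rfl⟩ := hC.surjOn hf hbC
    exact ⟨a, ⟨haC, hrel.pull hf hC hδ hx haC⟩, rfl⟩

lemma image_classCdelta_iterate (hf : Continuous f) (hC : IsChainComponent f C) (hδ : 0 < δ)
    (hx : x ∈ C) (i : ℕ) :
    f^[i] '' classCdelta f C δ x = classCdelta f C δ (f^[i] x) := by
  induction i with
  | zero => simp
  | succ n ih =>
      rw [Function.iterate_succ', Set.image_comp, ih, Function.comp_apply]
      exact image_classCdelta hf hC hδ (hC.mapsTo hf |>.iterate n hx)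

lemma mem_classCdelta_self (hf : Continuous f) (hC : IsChainComponent f C) (hδ : 0 < δ)
    (hx : x ∈ C) : x ∈ classCdelta f C δ x :=
  ⟨hx, relCdelta.refl hf hC hδ hx⟩

lemma rel_of_mem_classes (hf : Continuous f) (hC : IsChainComponent f C) (hδ : 0 < δ)
    (ha1 : z ∈ classCdelta f C δ x) (ha2 : z ∈ classCdelta f C δ y) :
    relCdelta f C δ x y :=
  ha1.2.trans (ha2.2.symm hf hC hδ)

lemma classCdelta_open (hf : Continuous f) (hC : IsChainComponent f C) (hδ : 0 < δ)
    (hy : y ∈ classCdelta f C δ x) :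
    ∃ r > 0, ∀ y' ∈ C, dist y y' < r → y' ∈ classCdelta f C δ x := by
  obtain ⟨hyC, hrel⟩ := hy
  obtain ⟨r, hr, hcont⟩ := Metric.continuous_iff.1 hf y (δ/2) (by linarith)
  refine ⟨r, hr, fun y' hy'C hdy' => ?_⟩
  obtain ⟨K, hK0, c, hS, h0, hKK, hs⟩ :=
    hC.chainTransitiveOn hf y' hy'C y' hy'C (δ/2) (by linarith)
  have hKcyc : K ∈ cycLengths f C δ := ⟨y', hy'C, ⟨hK0, c, hS, h0, hKK, fun i hi => le_trans (hs i hi) (by linarith)⟩⟩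
  have hchain : ChainInLen f C δ y y' K := by
    refine ⟨hK0, fun i => if i = 0 then y else c i, ?_, by simp, ?_, ?_⟩
    · intro i hi
      by_cases h : i = 0
      · simpa [h] using hyC
      · simpa [h] using hS i hi
    · show (if K = 0 then y else c K) = y'
      rw [if_neg (by omega), hKK]
    · intro i hi
      show dist (f (if i = 0 then y else c i)) (if i + 1 = 0 then y else c (i+1)) ≤ δ
      rw [if_neg (by omega : ¬ (i + 1 = 0))]
      by_cases h : i = 0
      · rw [if_pos h, h]
        calc dist (f y) (c 1)
            ≤ dist (f y) (f (c 0)) + dist (f (c 0)) (c 1) := dist_triangle _ _ _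
          _ ≤ δ/2 + δ/2 := by
              refine add_le_add ?_ (hs 0 (h ▸ hi))
              rw [dist_comm]
              refine le_of_lt (hcont (c 0) ?_)
              rw [h0, dist_comm]
              exact hdy'
          _ = δ := by ring
      · rw [if_neg h]
        exact le_trans (hs i hi) (by linarith)
  have : relCdelta f C δ y y' := ⟨K, good_of_cyc hKcyc, hchain⟩
  exact ⟨hy'C, hrel.trans this⟩

lemma classCdelta_isClosed (hf : Continuous f) (hC : IsChainComponent f C) (hδ : 0 < δ) :
    IsClosed (classCdelta f C δ x) := by
  refine IsSeqClosed.isClosed (fun u w hu huw => ?_)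
  have huC : ∀ n, u n ∈ C := fun n => (hu n).1
  have hwC : w ∈ C := (hC.isClosed hf).isSeqClosed huC huw
  obtain ⟨r, hr, hball⟩ := classCdelta_open hf hC hδ (mem_classCdelta_self hf hC hδ hwC)
  obtain ⟨n, hn⟩ := Metric.tendsto_atTop.1 huw r hr
  have h1 : u n ∈ classCdelta f C δ w := by
    refine hball (u n) (huC n) ?_
    rw [dist_comm]
    exact hn n le_rfl
  exact ⟨hwC, ((hu n).2.trans (h1.2.symm hf hC hδ))⟩

end relmachine
section separation

variable [CompactSpace X] {f : X → X} {C : Set X} {δ : ℝ} {x y z u v : X}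

lemma exists_finite_reps (hf : Continuous f) (hC : IsChainComponent f C) (hδ : 0 < δ) :
    ∃ F : Finset X, (∀ p ∈ F, p ∈ C) ∧ ∀ u ∈ C, ∃ p ∈ F, relCdelta f C δ p u := by
  classical
  have hr : ∀ y : X, ∃ r > 0, y ∈ C → ∀ y' ∈ C, dist y y' < r → y' ∈ classCdelta f C δ y := by
    intro y
    by_cases hy : y ∈ C
    · obtain ⟨r, hr, h⟩ := classCdelta_open hf hC hδ (mem_classCdelta_self hf hC hδ hy)
      exact ⟨r, hr, fun _ => h⟩
    · exact ⟨1, one_pos, fun h => absurd h hy⟩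
  choose r hr0 hrmem using hr
  have hcover : C ⊆ ⋃ y ∈ C, Metric.ball y (r y) := by
    intro u hu
    exact mem_biUnion hu (Metric.mem_ball_self (hr0 u))
  obtain ⟨F0, hF0sub, hF0fin, hF0cov⟩ := (hC.isClosed hf).isCompact.elim_finite_subcover_image
      (fun y _ => Metric.isOpen_ball) hcover
  refine ⟨hF0fin.toFinset, fun p hp => hF0sub (hF0fin.mem_toFinset.1 hp), fun u hu => ?_⟩
  obtain ⟨y, hyF0, hyball⟩ := mem_iUnion₂.1 (hF0cov hu)
  have hyC : y ∈ C := hF0sub hyF0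
  have hmem := hrmem y hyC u hu (by rw [dist_comm]; exact Metric.mem_ball.1 hyball)
  exact ⟨y, hF0fin.mem_toFinset.2 hyF0, hmem.2⟩

lemma exists_sep (hf : Continuous f) (hC : IsChainComponent f C) (hδ : 0 < δ) :
    ∃ η > 0, ∀ u ∈ C, ∀ v ∈ C, ¬ relCdelta f C δ u v →
      ∀ a ∈ classCdelta f C δ u, ∀ b ∈ classCdelta f C δ v, η ≤ dist a b := by
  classical
  obtain ⟨F, hFC, hFrep⟩ := exists_finite_reps hf hC hδ
  have hpair : ∀ pq : X × X, ∃ η > 0,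
      (pq.1 ∈ C ∧ pq.2 ∈ C ∧ ¬ relCdelta f C δ pq.1 pq.2) →
      ∀ a ∈ classCdelta f C δ pq.1, ∀ b ∈ classCdelta f C δ pq.2, η ≤ dist a b := by
    rintro ⟨p, q⟩
    by_cases hpq : p ∈ C ∧ q ∈ C ∧ ¬ relCdelta f C δ p q
    · obtain ⟨hp, hq, hrel⟩ := hpq
      have hA : IsCompact (classCdelta f C δ p) :=
        (classCdelta_isClosed hf hC hδ).isCompact
      have hAne : (classCdelta f C δ p).Nonempty := ⟨p, mem_classCdelta_self hf hC hδ hp⟩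
      have hBne : (classCdelta f C δ q).Nonempty := ⟨q, mem_classCdelta_self hf hC hδ hq⟩
      have hBcl : IsClosed (classCdelta f C δ q) := classCdelta_isClosed hf hC hδ
      obtain ⟨a₀, ha₀, hmin⟩ := hA.exists_isMinOn hAne
        ((continuous_infDist_pt (classCdelta f C δ q)).continuousOn)
      refine ⟨infDist a₀ (classCdelta f C δ q), ?_, ?_⟩
      · refine (hBcl.notMem_iff_infDist_pos hBne).1 (fun hmem => ?_)
        exact hrel (rel_of_mem_classes hf hC hδ ha₀ hmem)
      · intro _ a ha b hb
        calc infDist a₀ (classCdelta f C δ q) ≤ infDist a (classCdelta f C δ q) :=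
              isMinOn_iff.1 hmin a ha
          _ ≤ dist a b := infDist_le_dist_of_mem hb
    · exact ⟨1, one_pos, fun h => absurd h hpq⟩
  choose η hη0 hηbound using hpair
  by_cases hFne : (F ×ˢ F : Finset (X × X)).Nonempty
  · refine ⟨(F ×ˢ F).inf' hFne η, ?_, ?_⟩
    · rw [gt_iff_lt, Finset.lt_inf'_iff]
      exact fun pq _ => hη0 pq
    · intro u hu v hv hrel a ha b hb
      obtain ⟨p, hpF, hpu⟩ := hFrep u hu
      obtain ⟨q, hqF, hqv⟩ := hFrep v hv
      have hpq : ¬ relCdelta f C δ p q :=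
        fun h => hrel ((hpu.symm hf hC hδ).trans (h.trans hqv))
      have hap : a ∈ classCdelta f C δ p := ⟨ha.1, hpu.trans ha.2⟩
      have hbq : b ∈ classCdelta f C δ q := ⟨hb.1, hqv.trans hb.2⟩
      calc (F ×ˢ F).inf' hFne η ≤ η (p, q) :=
            Finset.inf'_le _ (Finset.mem_product.2 ⟨hpF, hqF⟩)
        _ ≤ dist a b := hηbound (p, q) ⟨hFC p hpF, hFC q hqF, hpq⟩ a hap b hbq
  · exfalso
    obtain ⟨u, hu⟩ := hC.nonempty
    obtain ⟨p, hpF, -⟩ := hFrep u hu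
    exact hFne ⟨(p, p), Finset.mem_product.2 ⟨hpF, hpF⟩⟩

end separation
section tracking

variable [CompactSpace X] {f : X → X} {C : Set X} {δ : ℝ} {x z : X}

lemma basin_small (hz : z ∈ basin f C) {ε : ℝ} (hε : 0 < ε) :
    ∃ N, ∀ j, N ≤ j → infDist (f^[j] z) C < ε := by
  obtain ⟨N, hN⟩ := Metric.tendsto_atTop.1 hz ε hε
  refine ⟨N, fun j hj => ?_⟩
  have h := hN j hj
  rwa [Real.dist_0_eq_abs, abs_of_nonneg infDist_nonneg] at h

/-- the nearest-point pseudo-orbit eventually determines coherent classes -/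
lemma basin_coherence (hf : Continuous f) (hC : IsChainComponent f C) (hδ : 0 < δ)
    {p : ℕ → X} (hpC : ∀ i, p i ∈ C)
    (hclose : ∀ i, infDist (f^[i] z) C = dist (f^[i] z) (p i)) (hz : z ∈ basin f C) :
    ∃ N, ∀ j, N ≤ j → ∀ i, j ≤ i → relCdelta f C δ (f^[i - j] (p j)) (p i) := by
  obtain ⟨η', hη', hunif⟩ := Metric.uniformContinuous_iff.1
    (CompactSpace.uniformContinuous_of_continuous hf) (δ/2) (by linarith)
  set ε₀ := min η' (δ/2) with hε₀
  obtain ⟨N, hN⟩ := basin_small hz (show 0 < ε₀ by positivity)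
  have hstep : ∀ j, N ≤ j → dist (f (p j)) (p (j+1)) ≤ δ := by
    intro j hj
    have h1 : dist (f^[j] z) (p j) < ε₀ := (hclose j) ▸ hN j hj
    have h2 : dist (f^[j+1] z) (p (j+1)) < ε₀ := (hclose (j+1)) ▸ hN (j+1) (by omega)
    have h3 : dist (f (p j)) (f (f^[j] z)) < δ/2 := by
      refine hunif ?_
      rw [dist_comm]
      exact lt_of_lt_of_le h1 (min_le_left _ _)
    calc dist (f (p j)) (p (j+1))
        ≤ dist (f (p j)) (f (f^[j] z)) + dist (f (f^[j] z)) (p (j+1)) := dist_triangle _ _ _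
      _ ≤ δ/2 + δ/2 := by
          refine add_le_add h3.le ?_
          rw [← Function.iterate_succ_apply' f j z]
          exact le_trans h2.le (min_le_right _ _)
      _ = δ := by ring
  refine ⟨N, fun j hj i hi => ?_⟩
  rcases eq_or_lt_of_le hi with rfl | hlt
  · simpa using relCdelta.refl hf hC hδ (hpC j)
  · set l := i - j with hl
    have hl0 : 0 < l := by omega
    have hpseudo : ChainInLen f C δ (p j) (p i) l := by
      refine ⟨hl0, fun t => p (j + t), fun t _ => hpC _, by simp, ?_, ?_⟩
      · show p (j + l) = p i
        rw [show j + l = i from by omega]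
      · intro t ht
        show dist (f (p (j + t))) (p (j + (t + 1))) ≤ δ
        have h5 := hstep (j + t) (by omega)
        rwa [show j + (t + 1) = (j + t) + 1 from by omega]
    have horb : ChainInLen f C δ (p j) (f^[l] (p j)) l :=
      chainInLen_orbit (hC.mapsTo hf) (hpC j) hδ.le hl0
    have hfl : f^[l] (p j) ∈ C := (hC.mapsTo hf).iterate l (hpC j)
    obtain ⟨L, hL⟩ := hC.chainTransitiveOn hf _ hfl (p j) (hpC j) δ hδ
    have hcyc : (l + L) ∈ cycLengths f C δ := ⟨p j, hpC j, horb.concat hL⟩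
    refine ⟨L + l, ?_, hL.concat hpseudo⟩
    intro d hd
    have := good_of_cyc hcyc d hd
    rwa [Nat.add_comm] at this

lemma track_fwd (hf : Continuous f) (hC : IsChainComponent f C) (hδ : 0 < δ)
    (hx : x ∈ C) {p : ℕ → X} {N : ℕ}
    (hcoh : ∀ i, N ≤ i → relCdelta f C δ (f^[i - N] (p N)) (p i))
    (h : relCdelta f C δ (f^[N] x) (p N)) :
    ∀ i, N ≤ i → relCdelta f C δ (f^[i] x) (p i) := by
  intro i hi
  have h2 := h.push_iterate hf hC hδ (i - N)
  rw [← Function.iterate_add_apply, show i - N + N = i from by omega] at h2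
  exact h2.trans (hcoh i hi)

lemma track_bwd (hf : Continuous f) (hC : IsChainComponent f C) (hδ : 0 < δ)
    (hx : x ∈ C) {p : ℕ → X} (hpC : ∀ i, p i ∈ C) {N i : ℕ} (hi : N ≤ i)
    (hcoh : ∀ i, N ≤ i → relCdelta f C δ (f^[i - N] (p N)) (p i))
    (h : relCdelta f C δ (f^[i] x) (p i)) :
    relCdelta f C δ (f^[N] x) (p N) := by
  have h2 : relCdelta f C δ (f^[i] x) (f^[i - N] (p N)) :=
    h.trans ((hcoh i hi).symm hf hC hδ)
  rw [show f^[i] x = f^[i - N] (f^[N] x) from by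
    rw [← Function.iterate_add_apply, show i - N + N = i from by omega]] at h2
  exact relCdelta.pull_iterate hf hC hδ ((hC.mapsTo hf).iterate N hx) (hpC N) (i - N) h2

end tracking

/-- The basin `W^s(C)` is the disjoint union of the sets `V^s(D)` over the
classes `D` of `∼_C`, and each `V^s(D)` is a Gδ subset of `W^s(C)`. -/
theorem stmt10 {X : Type*} [MetricSpace X] [CompactSpace X]
    (f : X → X) (hf : Continuous f) (C : Set X) (hC : IsChainComponent f C) :
    (∀ x ∈ C, Vs f C x ⊆ basin f C) ∧
    (∀ z ∈ basin f C, ∃ x ∈ C, z ∈ Vs f C x) ∧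
    (∀ x ∈ C, ∀ y ∈ C, ∀ z : X, z ∈ Vs f C x → z ∈ Vs f C y → relC f C x y) ∧
    (∀ x ∈ C, IsGδ {z : basin f C | (z : X) ∈ Vs f C x}) := by
  classical
  refine ⟨fun x hx z hz => hz.1, ?_, ?_, ?_⟩
  · -- Part 2: every point of the basin tracks some class
    intro z hz
    have hnear : ∀ i : ℕ, ∃ q ∈ C, infDist (f^[i] z) C = dist (f^[i] z) q :=
      fun i => (hC.isClosed hf).isCompact.exists_infDist_eq_dist hC.nonempty _
    choose p hpC hpd using hnear
    have hcohall : ∀ n : ℕ, ∃ N, ∀ j, N ≤ j → ∀ i, j ≤ i →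
        relCdelta f C (1/(n+1)) (f^[i - j] (p j)) (p i) :=
      fun n => basin_coherence hf hC (by positivity) hpC hpd hz
    choose N' hN' using hcohall
    set M : ℕ → ℕ := fun n => (Finset.range (n+1)).sup N' with hM
    have hMN : ∀ n, N' n ≤ M n := fun n => Finset.le_sup (Finset.self_mem_range_succ n)
    have hMmono : ∀ n, M n ≤ M (n+1) :=
      fun n => Finset.sup_mono (Finset.range_subset_range.2 (by omega))
    have hδn : ∀ n : ℕ, (0:ℝ) < 1/(n+1) := fun n => by positivity
    set T : ℕ → Set X :=
      fun n => C ∩ (f^[M n]) ⁻¹' (classCdelta f C (1/(n+1)) (p (M n))) with hT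
    have hTclosed : ∀ n, IsClosed (T n) := fun n =>
      (hC.isClosed hf).inter
        ((classCdelta_isClosed hf hC (hδn n)).preimage (hf.iterate _))
    have hTne : ∀ n, (T n).Nonempty := by
      intro n
      obtain ⟨w, hwC, hw⟩ := hC.surjOn_iterate hf (M n) (hpC (M n))
      refine ⟨w, hwC, ?_⟩
      show f^[M n] w ∈ classCdelta f C (1/(n+1)) (p (M n))
      rw [hw]
      exact mem_classCdelta_self hf hC (hδn n) (hpC (M n))
    have hTnest : ∀ n, T (n+1) ⊆ T n := by
      intro n w hw
      obtain ⟨hwC, hwcl⟩ := hw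
      have hwcl' : f^[M (n+1)] w ∈ classCdelta f C (1/(↑(n+1)+1)) (p (M (n+1))) := hwcl
      have hmono : (1:ℝ)/(↑(n+1)+1) ≤ 1/(↑n+1) := by
        rw [div_le_div_iff₀ (by positivity) (by positivity)]
        push_cast; nlinarith
      have hrel1 : relCdelta f C (1/(n+1)) (p (M (n+1))) (f^[M (n+1)] w) :=
        hwcl'.2.mono hmono
      have hcoh := hN' n (M n) (hMN n) (M (n+1)) (hMmono n)
      have hrel2 := hcoh.trans hrel1
      rw [show f^[M (n+1)] w = f^[M (n+1) - M n] (f^[M n] w) from by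
        rw [← Function.iterate_add_apply,
          show M (n+1) - M n + M n = M (n+1) from by have := hMmono n; omega]] at hrel2
      have hrel3 := relCdelta.pull_iterate hf hC (hδn n) (hpC (M n))
        ((hC.mapsTo hf).iterate _ hwC) _ hrel2
      exact ⟨hwC, ⟨(hC.mapsTo hf).iterate _ hwC, hrel3⟩⟩
    obtain ⟨x, hxT⟩ := IsCompact.nonempty_iInter_of_sequence_nonempty_isCompact_isClosed
      T hTnest hTne ((hTclosed 0).isCompact) hTclosed
    have hxC : x ∈ C := (mem_iInter.1 hxT 0).1
    refine ⟨x, hxC, hz, ?_⟩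
    intro δ hδ
    obtain ⟨n, hn⟩ := exists_nat_one_div_lt hδ
    have hδn' : (1:ℝ)/(n+1) ≤ δ := hn.le
    have h1 : f^[M n] x ∈ classCdelta f C (1/(n+1)) (p (M n)) := (mem_iInter.1 hxT n).2
    have hxn : relCdelta f C δ (f^[M n] x) (p (M n)) :=
      (h1.2.symm hf hC (hδn n)).mono hδn'
    have hcohδ : ∀ i, M n ≤ i → relCdelta f C δ (f^[i - M n] (p (M n))) (p i) :=
      fun i hi => (hN' n (M n) (hMN n) i hi).mono hδn'
    have hkey := track_fwd hf hC hδ hxC hcohδ hxn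
    refine squeeze_zero' (Eventually.of_forall (fun i => infDist_nonneg)) ?_ hz
    refine eventually_atTop.2 ⟨M n, fun i hi => ?_⟩
    rw [image_classCdelta_iterate hf hC hδ hxC]
    calc infDist (f^[i] z) (classCdelta f C δ (f^[i] x))
        ≤ dist (f^[i] z) (p i) := infDist_le_dist_of_mem ⟨hpC i, hkey i hi⟩
      _ = infDist (f^[i] z) C := (hpd i).symm
  · -- Part 3: disjointness
    intro x hx y hy z hzx hzy δ hδ
    obtain ⟨η, hη0, hsep⟩ := exists_sep hf hC hδ
    obtain ⟨N₁, hN₁⟩ := Metric.tendsto_atTop.1 (hzx.2 δ hδ) (η/2) (by linarith)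
    obtain ⟨N₂, hN₂⟩ := Metric.tendsto_atTop.1 (hzy.2 δ hδ) (η/2) (by linarith)
    set i := max N₁ N₂ with hi
    have h1 : infDist (f^[i] z) (f^[i] '' classCdelta f C δ x) < η/2 := by
      have h := hN₁ i (le_max_left _ _)
      rwa [Real.dist_0_eq_abs, abs_of_nonneg infDist_nonneg] at h
    have h2 : infDist (f^[i] z) (f^[i] '' classCdelta f C δ y) < η/2 := by
      have h := hN₂ i (le_max_right _ _)
      rwa [Real.dist_0_eq_abs, abs_of_nonneg infDist_nonneg] at h
    rw [image_classCdelta_iterate hf hC hδ hx] at h1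
    rw [image_classCdelta_iterate hf hC hδ hy] at h2
    have hfx : f^[i] x ∈ C := (hC.mapsTo hf).iterate i hx
    have hfy : f^[i] y ∈ C := (hC.mapsTo hf).iterate i hy
    obtain ⟨a, ha, hda⟩ :=
      (infDist_lt_iff ⟨f^[i] x, mem_classCdelta_self hf hC hδ hfx⟩).1 h1
    obtain ⟨b, hb, hdb⟩ :=
      (infDist_lt_iff ⟨f^[i] y, mem_classCdelta_self hf hC hδ hfy⟩).1 h2
    by_contra hrel
    have hreli : ¬ relCdelta f C δ (f^[i] x) (f^[i] y) :=
      fun h => hrel (relCdelta.pull_iterate hf hC hδ hx hy i h)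
    have hsepab := hsep _ hfx _ hfy hreli a ha b hb
    have htri : dist a b ≤ dist a (f^[i] z) + dist (f^[i] z) b := dist_triangle _ _ _
    rw [dist_comm] at hda
    linarith
  · -- Part 4: Gδ
    intro x hx
    set A : ℕ → ℕ → Set X := fun n m =>
      ⋃ i : ℕ, {w : X | infDist (f^[i] w) (f^[i] '' classCdelta f C (1/(n+1)) x) < 1/(m+1)}
      with hA
    have hAopen : ∀ n m, IsOpen (A n m) := fun n m =>
      isOpen_iUnion (fun i =>
        isOpen_lt ((continuous_infDist_pt _).comp (hf.iterate i)) continuous_const)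
    have hδposn : ∀ n : ℕ, (0:ℝ) < 1/(n+1) := fun n => by positivity
    have hset : {z : basin f C | (z : X) ∈ Vs f C x} =
        ⋂ n, ⋂ m, (Subtype.val ⁻¹' A n m : Set (basin f C)) := by
      ext ⟨z, hzb⟩
      simp only [mem_setOf_eq, mem_iInter, mem_preimage]
      constructor
      · intro hzV n m
        have ht := hzV.2 (1/(n+1)) (hδposn n)
        obtain ⟨N, hN⟩ := Metric.tendsto_atTop.1 ht (1/(m+1)) (by positivity)
        have h := hN N le_rfl
        rw [Real.dist_0_eq_abs, abs_of_nonneg infDist_nonneg] at h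
        exact mem_iUnion.2 ⟨N, h⟩
      · intro h
        refine ⟨hzb, ?_⟩
        intro δ hδ
        obtain ⟨n, hn⟩ := exists_nat_one_div_lt hδ
        have hδn : (0:ℝ) < 1/(n+1) := hδposn n
        have himg : ∀ i : ℕ, f^[i] '' classCdelta f C (1/(n+1)) x =
            classCdelta f C (1/(n+1)) (f^[i] x) :=
          image_classCdelta_iterate hf hC hδn hx
        have hclassne : ∀ i : ℕ, (classCdelta f C (1/(n+1)) (f^[i] x)).Nonempty :=
          fun i => ⟨f^[i] x, mem_classCdelta_self hf hC hδn ((hC.mapsTo hf).iterate i hx)⟩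
        have Htrack : Tendsto
            (fun i => infDist (f^[i] z) (f^[i] '' classCdelta f C (1/(n+1)) x))
            atTop (𝓝 0) := by
          by_cases hcase : ∃ i, f^[i] z ∈ classCdelta f C (1/(n+1)) (f^[i] x)
          · obtain ⟨i0, hi0⟩ := hcase
            refine squeeze_zero' (Eventually.of_forall fun i => infDist_nonneg)
              (eventually_atTop.2 ⟨i0, fun i hi => ?_⟩) tendsto_const_nhds
            have hmem : f^[i] z ∈ classCdelta f C (1/(n+1)) (f^[i] x) := by
              have hz' : f^[i] z = f^[i - i0] (f^[i0] z) := by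
                rw [← Function.iterate_add_apply, show i - i0 + i0 = i from by omega]
              have himg2 : f^[i - i0] '' classCdelta f C (1/(n+1)) (f^[i0] x) =
                  classCdelta f C (1/(n+1)) (f^[i - i0] (f^[i0] x)) :=
                image_classCdelta_iterate hf hC hδn ((hC.mapsTo hf).iterate i0 hx) (i - i0)
              rw [show f^[i - i0] (f^[i0] x) = f^[i] x from by
                rw [← Function.iterate_add_apply, show i - i0 + i0 = i from by omega]] at himg2
              rw [hz', ← himg2]
              exact mem_image_of_mem _ hi0
            rw [himg i, infDist_zero_of_mem hmem]
          · push_neg at hcase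
            obtain ⟨η, hη0, hsep⟩ := exists_sep hf hC hδn
            have hnear : ∀ i : ℕ, ∃ q ∈ C, infDist (f^[i] z) C = dist (f^[i] z) q :=
              fun i => (hC.isClosed hf).isCompact.exists_infDist_eq_dist hC.nonempty _
            choose p hpC hpd using hnear
            obtain ⟨N₀, hcoh⟩ := basin_coherence hf hC hδn hpC hpd hzb
            obtain ⟨N₁, hN₁⟩ := basin_small hzb (show (0:ℝ) < η/4 by linarith)
            set N := max N₀ N₁ with hNdef
            have hposi : ∀ i, 0 < infDist (f^[i] z) (classCdelta f C (1/(n+1)) (f^[i] x)) :=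
              fun i => ((classCdelta_isClosed hf hC hδn).notMem_iff_infDist_pos
                (hclassne i)).1 (hcase i)
            set c := (Finset.range (N+1)).inf' ⟨0, Finset.mem_range.2 (by omega)⟩
              (fun i => infDist (f^[i] z) (classCdelta f C (1/(n+1)) (f^[i] x))) with hc
            have hc0 : 0 < c := by
              rw [hc]; apply (Finset.lt_inf'_iff _).2
              exact fun i _ => hposi i
            obtain ⟨m, hm⟩ := exists_nat_one_div_lt (show (0:ℝ) < min c (η/4) by positivity)
            obtain ⟨i, hi⟩ := mem_iUnion.1 (h n m)
            have hi' : infDist (f^[i] z) (classCdelta f C (1/(n+1)) (f^[i] x)) < 1/(m+1) := by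
              rw [← himg i]; exact hi
            have hiN : N + 1 ≤ i := by
              by_contra hcon
              have h5 : c ≤ infDist (f^[i] z) (classCdelta f C (1/(n+1)) (f^[i] x)) :=
                Finset.inf'_le _ (Finset.mem_range.2 (by omega))
              have h6 := lt_of_lt_of_le hm (min_le_left _ _)
              linarith
            have hiη : infDist (f^[i] z) (classCdelta f C (1/(n+1)) (f^[i] x)) < η/4 :=
              lt_of_lt_of_le (lt_trans hi' hm) (min_le_right _ _)
            obtain ⟨b, hb, hdb⟩ := (infDist_lt_iff (hclassne i)).1 hiη
            have hpi : dist (f^[i] z) (p i) < η/4 := (hpd i) ▸ hN₁ i (by omega)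
            have hdistpb : dist b (p i) < η := by
              calc dist b (p i) ≤ dist b (f^[i] z) + dist (f^[i] z) (p i) :=
                    dist_triangle _ _ _
                _ < η/4 + η/4 := by
                    rw [dist_comm] at hdb
                    exact add_lt_add hdb hpi
                _ ≤ η := by linarith
            have hreli : relCdelta f C (1/(n+1)) (f^[i] x) (p i) := by
              by_contra hcon
              have := hsep _ ((hC.mapsTo hf).iterate i hx) _ (hpC i) hcon b hb (p i)
                (mem_classCdelta_self hf hC hδn (hpC i))
              linarith
            have hcohN : ∀ i', N ≤ i' →
                relCdelta f C (1/(n+1)) (f^[i' - N] (p N)) (p i') :=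
              fun i' hi' => hcoh N (le_max_left _ _) i' hi'
            have hrelN := track_bwd hf hC hδn hx hpC (show N ≤ i by omega) hcohN hreli
            have hfwd := track_fwd hf hC hδn hx hcohN hrelN
            refine squeeze_zero' (Eventually.of_forall fun j => infDist_nonneg)
              (eventually_atTop.2 ⟨N, fun j hj => ?_⟩) hzb
            rw [himg j]
            calc infDist (f^[j] z) (classCdelta f C (1/(n+1)) (f^[j] x))
                ≤ dist (f^[j] z) (p j) := infDist_le_dist_of_mem ⟨hpC j, hfwd j hj⟩
              _ = infDist (f^[j] z) C := (hpd j).symm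
        refine squeeze_zero' (Eventually.of_forall fun i => infDist_nonneg)
          (Eventually.of_forall fun i => ?_) Htrack
        refine infDist_le_infDist_of_subset
          (image_mono (fun w hw => ⟨hw.1, hw.2.mono hn.le⟩)) ?_
        exact ⟨f^[i] x, mem_image_of_mem _ (mem_classCdelta_self hf hC hδn hx)⟩
    rw [hset]
    exact IsGδ.iInter fun n => IsGδ.iInter fun m =>
      ((hAopen n m).preimage continuous_subtype_val).isGδ
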